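/- Let p be a prime, m a positive integer, k an integer with 1 ≤ k ≤ m−1, q = p^k, and α, a, b ∈ F. The original Taniguchi multiplication on F × F, (x,y) ∗ (u,v) = ((x^q·u + α·x·u^q)^{q²} − a·(x^q·v − α·u^q·y)^q − b·(y^q·v + α·y·v^q), x·v + y·u), is isotopic to the Taniguchi multiplication T(q,α,a,b), i.e., to (x,y) ∘ (u,v) = (x^q·u + α^{q²}·x·u^q − a·(x·v^q − α^q·u·y^q) − b·(y^q·v + α·y·v^q), x·v^{q²} + y^{q²}·u). -/

import Mathlib

open scoped Classical
noncomputable section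

abbrev GF (p m : ℕ) [Fact p.Prime] := GaloisField p m

/-- The Taniguchi multiplication `T(q,α,a,b)` on `F × F` where `F = F_{p^m}`. -/
def taniMul (p m : ℕ) [Fact p.Prime] (q : ℕ) (α a b : GF p m) :
    GF p m × GF p m → GF p m × GF p m → GF p m × GF p m :=
  fun w z =>
    (w.1 ^ q * z.1 + α ^ q ^ 2 * w.1 * z.1 ^ q
       - a * (w.1 * z.2 ^ q - α ^ q * z.1 * w.2 ^ q)
       - b * (w.2 ^ q * z.2 + α * w.2 * z.2 ^ q),
     w.1 * z.2 ^ q ^ 2 + w.2 ^ q ^ 2 * z.1)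

/-- Two multiplications on `F × F` are isotopic if there are `F_p`-linear bijections
`N, L, M` with `N (w ∘₁ z) = L w ∘₂ M z` for all `w, z`. -/
def Isotopic (p m : ℕ) [Fact p.Prime]
    (mul1 mul2 : GF p m × GF p m → GF p m × GF p m → GF p m × GF p m) : Prop :=
  ∃ N L M : (GF p m × GF p m) ≃ₗ[ZMod p] GF p m × GF p m,
    ∀ w z, N (mul1 w z) = mul2 (L w) (M z)

/-- The original Taniguchi multiplication from Taniguchi's paper. -/
def taniMulOrig (p m : ℕ) [Fact p.Prime] (q : ℕ) (α a b : GF p m) :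
    GF p m × GF p m → GF p m × GF p m → GF p m × GF p m :=
  fun w z =>
    ((w.1 ^ q * z.1 + α * w.1 * z.1 ^ q) ^ q ^ 2
       - a * (w.1 ^ q * z.2 - α * z.1 ^ q * w.2) ^ q
       - b * (w.2 ^ q * z.2 + α * w.2 * z.2 ^ q),
     w.1 * z.2 + w.2 * z.1)


variable {p m : ℕ} [Fact p.Prime]

/-- The `n`-th Frobenius power `x ↦ x ^ p ^ n` as a `ZMod p`-linear equivalence. -/
noncomputable def frobLE (p m : ℕ) [Fact p.Prime] (n : ℕ) : GF p m ≃ₗ[ZMod p] GF p m :=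
  LinearEquiv.ofBijective
    { toFun := fun x => x ^ p ^ n
      map_add' := fun x y => by rw [add_pow_char_pow]
      map_smul' := fun c x => by
        simp only [RingHom.id_apply, Algebra.smul_def, mul_pow, ← map_pow,
          ZMod.pow_card_pow] }
    (by
      have hinj : Function.Injective (fun x : GF p m => x ^ p ^ n) := by
        intro x y h
        dsimp only at h
        have h2 : (x - y) ^ p ^ n = 0 := by
          rw [sub_pow_char_pow, h, sub_self]
        have h3 : x - y = 0 :=
          pow_eq_zero_iff (pow_ne_zero n (Fact.out : p.Prime).ne_zero) |>.mp h2
        exact sub_eq_zero.mp h3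
      exact ⟨hinj, Finite.injective_iff_surjective.mp hinj⟩)

@[simp] lemma frobLE_apply (n : ℕ) (x : GF p m) : frobLE p m n x = x ^ p ^ n := rfl

/-- The original Taniguchi multiplication is isotopic to the representation `taniMul`. -/
theorem taniguchi_orig_isotopic (p m k : ℕ) [Fact p.Prime] (hm : 0 < m)
    (hk1 : 1 ≤ k) (hk2 : k ≤ m - 1) (α a b : GF p m) :
    Isotopic p m (taniMulOrig p m (p ^ k) α a b) (taniMul p m (p ^ k) α a b) := by
  refine ⟨(LinearEquiv.refl (ZMod p) (GF p m)).prodCongr (frobLE p m (2 * k)),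
    (frobLE p m (2 * k)).prodCongr (LinearEquiv.refl (ZMod p) (GF p m)),
    (frobLE p m (2 * k)).prodCongr (LinearEquiv.refl (ZMod p) (GF p m)), ?_⟩
  rintro ⟨x, y⟩ ⟨u, v⟩
  have hq : (p ^ k) ^ 2 = p ^ (2 * k) := by rw [← pow_mul, mul_comm]
  simp only [taniMul, taniMulOrig, LinearEquiv.prodCongr_apply, LinearEquiv.refl_apply,
    Prod.map_apply, frobLE_apply, LinearEquiv.coe_coe]
  refine Prod.ext ?_ ?_ <;>
    simp only [hq, add_pow_char_pow, sub_pow_char_pow, mul_pow, ← pow_mul, ← pow_add] <;>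
    ring
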